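/- Let μ > 0, λ ∈ (0,1), let a be real and a0 a nonzero real, let ρ > 0, ρ1 > 0, ρ2 > 0, and let r̂1, r̂2 be real. If (λμa0/(2ρ))·[(ρ1² + ρ² − ρ2² − 2r̂2)/ρ1 + (ρ1² − ρ² − ρ2² − 2r̂1)/ρ2] = 0 and ((1−λ)μa/(2ρ))·[(ρ1² + ρ² − ρ2² − 2r̂2)/ρ1 + (ρ1² − ρ² − ρ2² − 2r̂1)/ρ2] + (1/ρ1 − 1/ρ2) = 0, then ρ1 = ρ2 and r̂2 = −r̂1. -/
import Mathlib


/-- Configuration III with a0 ≠ 0: vanishing of the two difference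
expressions forces ρ1 = ρ2 and r̂2 = −r̂1. -/
theorem stmt14 (μ lam a a0 ρ ρ1 ρ2 rh1 rh2 : ℝ)
    (hμ : μ > 0) (hlam1 : 0 < lam) (hlam2 : lam < 1) (ha0 : a0 ≠ 0)
    (hρ : ρ > 0) (h1 : ρ1 > 0) (h2 : ρ2 > 0)
    (e1 : (lam * μ * a0 / (2 * ρ)) *
        ((ρ1 ^ 2 + ρ ^ 2 - ρ2 ^ 2 - 2 * rh2) / ρ1
          + (ρ1 ^ 2 - ρ ^ 2 - ρ2 ^ 2 - 2 * rh1) / ρ2) = 0)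
    (e2 : ((1 - lam) * μ * a / (2 * ρ)) *
        ((ρ1 ^ 2 + ρ ^ 2 - ρ2 ^ 2 - 2 * rh2) / ρ1
          + (ρ1 ^ 2 - ρ ^ 2 - ρ2 ^ 2 - 2 * rh1) / ρ2)
        + (1 / ρ1 - 1 / ρ2) = 0) :
    ρ1 = ρ2 ∧ rh2 = -rh1 := by
  have hc : lam * μ * a0 / (2 * ρ) ≠ 0 := by positivity
  have hb : (ρ1 ^ 2 + ρ ^ 2 - ρ2 ^ 2 - 2 * rh2) / ρ1
      + (ρ1 ^ 2 - ρ ^ 2 - ρ2 ^ 2 - 2 * rh1) / ρ2 = 0 := by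
    rcases mul_eq_zero.mp e1 with h | h
    · exact absurd h hc
    · exact h
  have hinv : 1 / ρ1 - 1 / ρ2 = 0 := by
    rw [hb, mul_zero, zero_add] at e2; exact e2
  have h12 : ρ1 = ρ2 := by
    field_simp at hinv
    linarith
  refine ⟨h12, ?_⟩
  subst h12
  field_simp at hb
  nlinarith [sq_nonneg ρ1]
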